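/- Let m ≥ 1 and k ≥ 2. If Γ ⊆ D_m is a reversal-closed subset for δ ∈ {1,-1}^m, then the image ι(Γ) ⊆ D_{km} is a reversal-closed subset for δ(k) ∈ {1,-1}^{km}, the tuple obtained by repeating each entry of δ k times in place. -/

import Mathlib

/-- The action of the dihedral group `D_m` on `{1,-1}^m` (tuples indexed by `ZMod m`,
with position `i ∈ {1,…,m}` identified with `(i : ZMod m)`), where the rotation
`r = r 1` acts by `r(δ₁,…,δₘ) = (δₘ, δ₁, …, δ_{m-1})` and the reflection `f = sr 0`
acts by `f(δ₁,…,δₘ) = (-δₘ, …, -δ₂, -δ₁)`, i.e. `f(δ)ᵢ = -δ_{m+1-i}`. -/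
def dact {m : ℕ} : DihedralGroup m → (ZMod m → ℤˣ) → (ZMod m → ℤˣ)
  | .r i, δ => fun j => δ (j - i)
  | .sr i, δ => fun j => -δ (1 - i - j)

/-- `Γ ⊆ D_m` is reversal-closed for `δ ∈ {1,-1}^m` if for all `σ₁, σ₂ ∈ Γ` there
exists `σ₃ ∈ Γ` with `δ · σ₁(δ) · σ₂(δ) = σ₃(δ)`. -/
def ReversalClosed {m : ℕ} (Γ : Set (DihedralGroup m)) (δ : ZMod m → ℤˣ) : Prop :=
  ∀ σ₁ ∈ Γ, ∀ σ₂ ∈ Γ, ∃ σ₃ ∈ Γ, δ * dact σ₁ δ * dact σ₂ δ = dact σ₃ δ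

/-- The group homomorphism `π : D_{km} → D_m` determined by `π(r) = r`, `π(f) = f`. -/
def dihedralProj {m k : ℕ} : DihedralGroup (k * m) → DihedralGroup m
  | .r i => .r (ZMod.castHom (dvd_mul_left m k) (ZMod m) i)
  | .sr i => .sr (ZMod.castHom (dvd_mul_left m k) (ZMod m) i)

/-- The group homomorphism `ι : D_m → D_{km}` determined by `ι(r) = r^k`, `ι(f) = f`. -/
def dihedralIncl {m : ℕ} (k : ℕ) : DihedralGroup m → DihedralGroup (k * m)
  | .r i => .r ((k * i.val : ℕ) : ZMod (k * m))
  | .sr i => .sr ((k * i.val : ℕ) : ZMod (k * m))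

/-- `k(δ) ∈ {1,-1}^{km}`: the concatenation of `k` copies of `δ ∈ {1,-1}^m`. -/
def concatTuple {m : ℕ} (k : ℕ) (δ : ZMod m → ℤˣ) : ZMod (k * m) → ℤˣ :=
  fun j => δ (ZMod.castHom (dvd_mul_left m k) (ZMod m) j)

/-- `δ(k) ∈ {1,-1}^{km}`: the tuple in which each entry of `δ ∈ {1,-1}^m` is repeated
`k` times in place (position `p ∈ {1,…,km}` carries the value `δ_{⌈p/k⌉}`). -/
def repeatTuple {m : ℕ} (k : ℕ) (δ : ZMod m → ℤˣ) : ZMod (k * m) → ℤˣ :=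
  fun j => δ ((((j - 1).val / k : ℕ) : ZMod m) + 1)

lemma key_sub {m k : ℕ} (hm : 0 < m) (hk : 0 < k) (i : ZMod m) (x : ZMod (k * m)) :
    (((x - ((k * i.val : ℕ) : ZMod (k * m))).val / k : ℕ) : ZMod m)
      = ((x.val / k : ℕ) : ZMod m) - i := by
  haveI : NeZero m := ⟨hm.ne'⟩
  haveI : NeZero (k * m) := ⟨(Nat.mul_pos hk hm).ne'⟩
  set t := i.val with ht
  have hi : ((t : ℕ) : ZMod m) = i := by simp [ht, ZMod.natCast_val, ZMod.cast_id]
  have htm : t < m := ZMod.val_lt i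
  rcases Nat.eq_zero_or_pos t with h0 | h1
  · have : i = 0 := by rw [← hi, h0]; simp
    simp [h0, this]
  · set c := k * (m - t) with hcdef
    set d := k * t with hddef
    have hsum : c + d = k * m := by rw [hcdef, hddef, ← Nat.mul_add]; congr 1; omega
    have hdpos : 0 < d := Nat.mul_pos hk h1
    have hclt : c < k * m := by omega
    have hneg : ((d : ℕ) : ZMod (k * m)) = -((c : ℕ) : ZMod (k * m)) := by
      have h : ((c : ℕ) : ZMod (k * m)) + ((d : ℕ) : ZMod (k * m)) = 0 := by
        rw [← Nat.cast_add, hsum]; simp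
      linear_combination h
    rw [hneg, sub_neg_eq_add, ZMod.val_add]
    have hcv : ((c : ℕ) : ZMod (k * m)).val = c := by
      rw [ZMod.val_natCast, Nat.mod_eq_of_lt hclt]
    rw [hcv]
    set b := x.val with hb
    have hblt : b < k * m := ZMod.val_lt x
    by_cases hcase : b + c < k * m
    · rw [Nat.mod_eq_of_lt hcase, hcdef, Nat.add_mul_div_left _ _ hk]
      rw [Nat.cast_add, Nat.cast_sub htm.le, ZMod.natCast_self, hi]
      ring
    · have hm1 : (b + c) % (k * m) = b + c - (k * m) := by
        rw [Nat.mod_eq_sub_mod (by omega)]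
        exact Nat.mod_eq_of_lt (by omega)
      have heq2 : b + c - k * m = b - d := by omega
      rw [hm1, heq2, hddef, Nat.sub_mul_div b k t]
      have htb : t ≤ b / k := by
        rw [Nat.le_div_iff_mul_le hk, Nat.mul_comm]; omega
      rw [Nat.cast_sub htb, hi]

lemma key_neg {m k : ℕ} (hm : 0 < m) (hk : 2 ≤ k) (j : ZMod (k * m)) :
    (((-j).val / k : ℕ) : ZMod m) = -1 - (((j - 1).val / k : ℕ) : ZMod m) := by
  haveI : NeZero m := ⟨hm.ne'⟩
  haveI : NeZero (k * m) := ⟨(Nat.mul_pos (by omega) hm).ne'⟩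
  have hkm : 1 < k * m := by
    calc 1 < 2 * 1 := by norm_num
    _ ≤ k * m := Nat.mul_le_mul hk hm
  haveI : Fact (1 < k * m) := ⟨hkm⟩
  have hone : (1 : ZMod (k * m)).val = 1 := ZMod.val_one (k * m)
  by_cases hj : j = 0
  · subst hj
    simp only [neg_zero, ZMod.val_zero, Nat.zero_div, Nat.cast_zero, zero_sub]
    have hneg1 : ((-1 : ZMod (k * m))).val = k * m - 1 := by
      rw [ZMod.neg_val]
      simp [hone]
    rw [hneg1]
    have hdiv : (k * m - 1) / k = m - 1 := by
      have h1 : k * (m - 1) + (k - 1) = k * m - 1 := by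
        have h2 : k * (m - 1) + k = k * m := by rw [← Nat.mul_succ]; congr 1; omega
        omega
      rw [← h1, Nat.mul_add_div (by omega), Nat.div_eq_of_lt (by omega)]
      omega
    rw [hdiv, Nat.cast_sub (by omega : 1 ≤ m), ZMod.natCast_self]
    push_cast
    ring
  · set a := j.val with ha
    have ha1 : 1 ≤ a := by
      rcases Nat.eq_zero_or_pos a with h | h
      · exact absurd ((ZMod.val_eq_zero j).mp h) hj
      · exact h
    have halt : a < k * m := ZMod.val_lt j
    have hnegval : (-j).val = k * m - a := by
      rw [ZMod.neg_val]; simp [hj, ha]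
    have hja : ((a : ℕ) : ZMod (k * m)) = j := by simp [ha, ZMod.natCast_val, ZMod.cast_id]
    have hsubval : (j - 1).val = a - 1 := by
      rw [← hja, ← Nat.cast_one, ← Nat.cast_sub ha1, ZMod.val_natCast,
        Nat.mod_eq_of_lt (by omega)]
    rw [hnegval, hsubval]
    set q := (a - 1) / k with hq
    set s := (a - 1) % k with hs
    have hdm : k * q + s = a - 1 := Nat.div_add_mod (a - 1) k
    have hsk : s < k := Nat.mod_lt _ (by omega)
    have hqm : q < m := by
      have h : k * q < k * m := by omega
      exact Nat.lt_of_mul_lt_mul_left h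
    have haux2 : k * (m - 1 - q) + k * (1 + q) = k * m := by
      rw [← Nat.mul_add]; congr 1; omega
    have haux3 : k * (1 + q) = k + k * q := by ring
    have hkey : k * m - a = k * (m - 1 - q) + (k - 1 - s) := by omega
    rw [hkey, Nat.mul_add_div (by omega), Nat.div_eq_of_lt (by omega), Nat.add_zero]
    have h5 : m - 1 - q = m - (1 + q) := by omega
    rw [h5, Nat.cast_sub (by omega), ZMod.natCast_self]
    push_cast
    ring

lemma dact_incl {m k : ℕ} (hm : 0 < m) (hk : 2 ≤ k) (δ : ZMod m → ℤˣ) (σ : DihedralGroup m) :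
    dact (dihedralIncl k σ) (repeatTuple k δ) = repeatTuple k (dact σ δ) := by
  cases σ with
  | r i =>
    funext j
    simp only [dihedralIncl, dact, repeatTuple]
    rw [sub_right_comm, key_sub hm (by omega) i (j - 1)]
    congr 1; ring
  | sr i =>
    funext j
    simp only [dihedralIncl, dact, repeatTuple]
    have harg : (1 : ZMod (k * m)) - ((k * i.val : ℕ) : ZMod (k * m)) - j - 1
        = -j - ((k * i.val : ℕ) : ZMod (k * m)) := by ring
    rw [harg, key_sub hm (by omega) i (-j), key_neg hm hk j]
    congr 1; ring

/-- If `Γ ⊆ D_m` is reversal-closed for `δ ∈ {1,-1}^m`, then the image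
`ι(Γ) ⊆ D_{km}` is reversal-closed for `δ(k) ∈ {1,-1}^{km}`. -/
theorem image_reversal_closed_repeat {m k : ℕ} (hm : 1 ≤ m) (hk : 2 ≤ k)
    (δ : ZMod m → ℤˣ) (Γ : Set (DihedralGroup m)) (hΓ : ReversalClosed Γ δ) :
    ReversalClosed (dihedralIncl k '' Γ) (repeatTuple k δ) := by
  rintro _ ⟨σ₁, h1, rfl⟩ _ ⟨σ₂, h2, rfl⟩
  obtain ⟨σ₃, h3, heq⟩ := hΓ σ₁ h1 σ₂ h2
  refine ⟨dihedralIncl k σ₃, ⟨σ₃, h3, rfl⟩, ?_⟩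
  rw [dact_incl hm hk, dact_incl hm hk, dact_incl hm hk, ← heq]
  rfl
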